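/- Let r₁, r₂, r∞ be rational numbers with 0 < r₁ ≤ r₂ < 1 and 0 < r∞ < 1, and suppose the triple (1-r₁, 1-r₂, 1-r∞) is realizable. Then there exists a rational number ε > 0 such that for every rational number r with r∞ - ε < r < 1, the triple (1-r₁, 1-r₂, 1-r) is realizable. (This is the statement that if S²(-2, r₁, r₂, r∞) is not an L-space, then S²(-2, r₁, r₂, r) is not an L-space for any rational r with r∞ - ε < r < 1.) -/

import Mathlib

/-- A triple of rationals is *realizable* if there exist relatively prime positive
integers `a`, `k` with `0 < a ≤ k/2` such that the increasing rearrangement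
`(t₁, t₂, t₃)` of `(s₁, s₂, s₃)` satisfies `t₁ < 1/k`, `t₂ < a/k`, `t₃ < (k-a)/k`. -/
def Realizable (s₁ s₂ s₃ : ℚ) : Prop :=
  ∃ a k : ℕ, 0 < a ∧ 2 * a ≤ k ∧ Nat.Coprime a k ∧
    ∃ t₁ t₂ t₃ : ℚ, ({t₁, t₂, t₃} : Multiset ℚ) = ({s₁, s₂, s₃} : Multiset ℚ) ∧
      t₁ ≤ t₂ ∧ t₂ ≤ t₃ ∧
      t₁ < 1 / (k : ℚ) ∧ t₂ < (a : ℚ) / k ∧ t₃ < ((k : ℚ) - (a : ℚ)) / k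

lemma ms_swap12 (a b c : ℚ) : ({a,b,c} : Multiset ℚ) = {b,a,c} := by
  show a ::ₘ b ::ₘ (c ::ₘ 0) = b ::ₘ a ::ₘ (c ::ₘ 0)
  exact Multiset.cons_swap a b _

lemma ms_swap23 (a b c : ℚ) : ({a,b,c} : Multiset ℚ) = {a,c,b} := by
  show a ::ₘ b ::ₘ (c ::ₘ 0) = a ::ₘ c ::ₘ (b ::ₘ 0)
  rw [Multiset.cons_swap b c]

lemma ms_perm1 (a b c : ℚ) : ({a,b,c} : Multiset ℚ) = {c,b,a} := by
  rw [ms_swap12 a b c, ms_swap23 b a c, ms_swap12 b c a]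

lemma ms_perm2 (a b c : ℚ) : ({a,b,c} : Multiset ℚ) = {b,c,a} := by
  rw [ms_swap12 a b c, ms_swap23 b a c]

lemma sorted_triple (t₁ t₂ t₃ : ℚ) (h12 : t₁ ≤ t₂) (h23 : t₂ ≤ t₃) :
    List.Pairwise (· ≤ ·) [t₁,t₂,t₃] := by
  simp [List.pairwise_cons]
  exact ⟨⟨h12, h12.trans h23⟩, h23⟩

lemma sorted_triple_unique (t₁ t₂ t₃ x y z : ℚ) (h : ({t₁,t₂,t₃} : Multiset ℚ) = {x,y,z})
    (h12 : t₁ ≤ t₂) (h23 : t₂ ≤ t₃) (hxy : x ≤ y) (hyz : y ≤ z) :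
    t₁ = x ∧ t₂ = y ∧ t₃ = z := by
  have h' : ([t₁,t₂,t₃] : List ℚ).Perm [x,y,z] := by
    rw [← Multiset.coe_eq_coe]; exact h
  have := List.Perm.eq_of_pairwise' (sorted_triple _ _ _ h12 h23)
    (sorted_triple _ _ _ hxy hyz) h'
  simp_all

/-- If `(1-r₁, 1-r₂, 1-r∞)` is realizable, then there is `ε > 0` such that
`(1-r₁, 1-r₂, 1-r)` is realizable for every `r∞ - ε < r < 1`. -/
theorem non_lspace_minus_two (r₁ r₂ rinf : ℚ)
    (h₁ : 0 < r₁) (h₁₂ : r₁ ≤ r₂) (h₂ : r₂ < 1)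
    (hinf : 0 < rinf) (hinf' : rinf < 1)
    (h : Realizable (1 - r₁) (1 - r₂) (1 - rinf)) :
    ∃ ε : ℚ, 0 < ε ∧ ∀ r : ℚ, rinf - ε < r → r < 1 →
      Realizable (1 - r₁) (1 - r₂) (1 - r) := by
  obtain ⟨a, k, ha, hak, hcop, t₁, t₂, t₃, hms, h12, h23, hb1, hb2, hb3⟩ := h
  set u : ℚ := 1 - r₁ with hu
  set v : ℚ := 1 - r₂ with hv
  set c : ℚ := 1 - rinf with hc
  have hvu : v ≤ u := by rw [hu, hv]; linarith
  set B₁ : ℚ := 1 / (k : ℚ) with hB₁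
  set B₂ : ℚ := (a : ℚ) / k with hB₂
  set B₃ : ℚ := ((k : ℚ) - (a : ℚ)) / k with hB₃
  have hk : 0 < (k : ℚ) := by
    have : 0 < k := by omega
    exact_mod_cast this
  have haq : (1 : ℚ) ≤ (a : ℚ) := by exact_mod_cast ha
  have hakq : 2 * (a : ℚ) ≤ (k : ℚ) := by exact_mod_cast hak
  have hB12 : B₁ ≤ B₂ := by
    rw [hB₁, hB₂]; exact (div_le_div_iff_of_pos_right hk).mpr haq
  have hB23 : B₂ ≤ B₃ := by
    rw [hB₂, hB₃]; exact (div_le_div_iff_of_pos_right hk).mpr (by linarith)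
  have build : ∀ w : ℚ, (∃ s₁ s₂ s₃ : ℚ,
      ({s₁, s₂, s₃} : Multiset ℚ) = ({u, v, w} : Multiset ℚ) ∧
      s₁ ≤ s₂ ∧ s₂ ≤ s₃ ∧ s₁ < B₁ ∧ s₂ < B₂ ∧ s₃ < B₃) →
      Realizable (1 - r₁) (1 - r₂) w := by
    intro w ⟨s₁, s₂, s₃, hms', hs12, hs23, hbb1, hbb2, hbb3⟩
    exact ⟨a, k, ha, hak, hcop, s₁, s₂, s₃, hms', hs12, hs23, hbb1, hbb2, hbb3⟩
  rcases le_total c v with hcv | hvc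
  · -- sorted order is (c, v, u)
    obtain ⟨e1, e2, e3⟩ := sorted_triple_unique t₁ t₂ t₃ c v u
      (by rw [hms, ms_perm1 u v c]) h12 h23 hcv hvu
    rw [e1] at hb1; rw [e2] at hb2; rw [e3] at hb3
    refine ⟨B₁ - c, by linarith, fun r hr hr1 => ?_⟩
    have hw : 1 - r < B₁ := by linarith [hc]
    apply build
    rcases le_total (1 - r) v with hA | hA
    · exact ⟨1 - r, v, u, by rw [ms_swap12 (1-r) v u, ms_swap23 v (1-r) u, ms_swap12 v u (1-r)], hA, hvu, hw, hb2, hb3⟩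
    · rcases le_total (1 - r) u with hB | hB
      · exact ⟨v, 1 - r, u, by rw [ms_swap23 v (1-r) u, ms_swap12 v u (1-r)], hA, hB,
          by linarith, by linarith, hb3⟩
      · exact ⟨v, u, 1 - r, by rw [ms_swap12 v u (1-r)], hvu, hB,
          by linarith, by linarith, by linarith⟩
  · rcases le_total c u with hcu | huc
    · -- sorted order is (v, c, u)
      obtain ⟨e1, e2, e3⟩ := sorted_triple_unique t₁ t₂ t₃ v c u
        (by rw [hms, ms_swap12 u v c, ms_swap23 v u c]) h12 h23 hvc hcu
      rw [e1] at hb1; rw [e2] at hb2; rw [e3] at hb3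
      refine ⟨B₂ - c, by linarith, fun r hr hr1 => ?_⟩
      have hw : 1 - r < B₂ := by linarith [hc]
      apply build
      rcases le_total (1 - r) v with hA | hA
      · exact ⟨1 - r, v, u, by rw [ms_swap12 (1-r) v u, ms_swap23 v (1-r) u, ms_swap12 v u (1-r)],
          hA, hvu, by linarith, by linarith, hb3⟩
      · rcases le_total (1 - r) u with hB | hB
        · exact ⟨v, 1 - r, u, by rw [ms_swap23 v (1-r) u, ms_swap12 v u (1-r)], hA, hB,
            hb1, hw, hb3⟩
        · exact ⟨v, u, 1 - r, by rw [ms_swap12 v u (1-r)], hvu, hB,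
            hb1, by linarith, by linarith⟩
    · -- sorted order is (v, u, c)
      obtain ⟨e1, e2, e3⟩ := sorted_triple_unique t₁ t₂ t₃ v u c
        (by rw [hms, ms_swap12 u v c]) h12 h23 hvu huc
      rw [e1] at hb1; rw [e2] at hb2; rw [e3] at hb3
      refine ⟨B₃ - c, by linarith, fun r hr hr1 => ?_⟩
      have hw : 1 - r < B₃ := by linarith [hc]
      apply build
      rcases le_total (1 - r) v with hA | hA
      · exact ⟨1 - r, v, u, by rw [ms_swap12 (1-r) v u, ms_swap23 v (1-r) u, ms_swap12 v u (1-r)],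
          hA, hvu, by linarith, by linarith, by linarith⟩
      · rcases le_total (1 - r) u with hB | hB
        · exact ⟨v, 1 - r, u, by rw [ms_swap23 v (1-r) u, ms_swap12 v u (1-r)], hA, hB,
            hb1, by linarith, by linarith⟩
        · exact ⟨v, u, 1 - r, by rw [ms_swap12 v u (1-r)], hvu, hB,
            hb1, hb2, hw⟩
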